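/- Let n, k, ℓ be natural numbers, let s : Fin n → (Fin k → ℕ) be a family of item-vectors, and let t : Fin k → ℕ be a target vector with t ≤ ∑_{i : Fin n} s i componentwise. Then there exists a subset S' ⊆ Fin n with |S'| ≤ ℓ and ∑_{i ∈ S'} s i ≥ t componentwise if and only if there exists a subset S'' ⊆ Fin n with |S''| ≥ n − ℓ and ∑_{i ∈ S''} s i ≤ (∑_{i : Fin n} s i) − t componentwise. (The two subsets can be taken to be complements of each other.) -/
import Mathlib


/-- The equivalence underlying the reduction from Multidimensional Relaxed
Subset Sum (MRSS) to Multidimensional Subset Sum (MSS). -/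
theorem mrss_to_mss (n k ℓ : ℕ) (s : Fin n → Fin k → ℕ) (t : Fin k → ℕ)
    (ht : ∀ j, t j ≤ ∑ i, s i j) :
    (∃ S' : Finset (Fin n), S'.card ≤ ℓ ∧ ∀ j, t j ≤ ∑ i ∈ S', s i j) ↔
    (∃ S'' : Finset (Fin n), n - ℓ ≤ S''.card ∧
      ∀ j, ∑ i ∈ S'', s i j ≤ (∑ i, s i j) - t j) := by
  constructor
  · rintro ⟨S, hc, hs⟩
    refine ⟨Sᶜ, ?_, fun j => ?_⟩
    · simp only [Finset.card_compl, Fintype.card_fin]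
      omega
    · have h := Finset.sum_add_sum_compl S (fun i => s i j)
      have := hs j
      omega
  · rintro ⟨S, hc, hs⟩
    refine ⟨Sᶜ, ?_, fun j => ?_⟩
    · have := Finset.card_le_univ S
      simp only [Finset.card_compl, Fintype.card_fin]
      simp [Fintype.card_fin] at this
      omega
    · have h := Finset.sum_add_sum_compl S (fun i => s i j)
      have := hs j
      have := ht j
      omega
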